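/- The complex number (2-i)/(2+i) is not a root of unity; that is, for every positive integer k, ((2-i)/(2+i))^k ≠ 1. -/
import Mathlib

lemma aux_pow_three_sub_four_i : ∀ k : ℕ,
    ∃ a b : ℤ, ((3 : ℂ) - 4 * Complex.I) ^ (k + 1) = a + b * Complex.I ∧
      a % 5 = 3 ∧ b % 5 = 1 := by
  intro k
  induction k with
  | zero =>
    refine ⟨3, -4, ?_, by decide, by decide⟩
    push_cast; ring
  | succ n ih =>
    obtain ⟨a, b, h, ha, hb⟩ := ih
    refine ⟨3 * a + 4 * b, 3 * b - 4 * a, ?_, by omega, by omega⟩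
    rw [pow_succ, h]
    push_cast
    linear_combination (-4 * (b : ℂ)) * Complex.I_sq

theorem not_root_of_unity_two_sub_i_div_two_add_i :
    ∀ k : ℕ, 0 < k → ((2 - Complex.I) / (2 + Complex.I)) ^ k ≠ 1 := by
  intro k hk h
  have h2 : (2 : ℂ) + Complex.I ≠ 0 := by
    intro hh
    have := congrArg Complex.im hh
    simp at this
  have key : ((2 : ℂ) - Complex.I) / (2 + Complex.I) = (3 - 4 * Complex.I) / 5 := by
    rw [div_eq_div_iff h2 (by norm_num)]
    linear_combination (4:ℂ) * Complex.I_sq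
  rw [key, div_pow] at h
  have h5 : ((5 : ℂ)) ^ k ≠ 0 := pow_ne_zero _ (by norm_num)
  have h' : ((3 : ℂ) - 4 * Complex.I) ^ k = 5 ^ k := by
    field_simp at h
    exact h
  obtain ⟨n, rfl⟩ : ∃ n, k = n + 1 := ⟨k - 1, by omega⟩
  obtain ⟨a, b, hab, ha, hb⟩ := aux_pow_three_sub_four_i n
  rw [hab] at h'
  have him := congrArg Complex.im h'
  simp at him
  have hb0 : b = 0 := by exact_mod_cast him
  omega
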